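/- arXiv:2310.12834 — 4 statements merged into one kernel-verified Lean document; each statement's English description precedes it below -/
import Mathlib

section
/- Let T be a lexicographically ordered ω₁-tree with exactly ℵ₂-many cofinal branches. Then the linear order (𝓑(T), <lex) is a Kurepa line: it has cardinality ℵ₂, the closure in its order topology of every countable subset is countable, and its density (the least cardinality of a subset that is dense in the order topology) is exactly ℵ₁. -/
noncomputable section

open Cardinal Set

def omega1 : Ordinal := (Cardinal.aleph 1).ord

def omega2 : Ordinal := (Cardinal.aleph 2).ord

/-- The height of an element `t`: the order type of its set of strict predecessors. -/
def htOf {X : Type} (lt : X → X → Prop)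
    (wo : ∀ t : X, IsWellOrder {s : X // lt s t} fun a b => lt a.1 b.1) (t : X) : Ordinal :=
  @Ordinal.type {s : X // lt s t} (fun a b => lt a.1 b.1) (wo t)

/-- A lexicographically ordered (normal) `ω₁`-tree. -/
structure LexOmega1Tree where
  T : Type
  lt : T → T → Prop
  lt_irrefl : ∀ a : T, ¬ lt a a
  lt_trans : ∀ {a b c : T}, lt a b → lt b c → lt a c
  /-- the strict predecessors of any element are well-ordered -/
  predWO : ∀ t : T, IsWellOrder {s : T // lt s t} fun a b => lt a.1 b.1
  /-- every level is countable -/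
  level_countable : ∀ α : Ordinal, {t : T | htOf lt predWO t = α}.Countable
  /-- levels are nonempty exactly below `ω₁` -/
  level_nonempty : ∀ α : Ordinal, (∃ t : T, htOf lt predWO t = α) ↔ α < omega1
  /-- normality: distinct elements of the same limit height have different predecessors -/
  normal : ∀ s t : T, htOf lt predWO s = htOf lt predWO t →
    Order.IsSuccLimit (htOf lt predWO s) → (∀ u : T, lt u s ↔ lt u t) → s = t
  /-- the lexicographic comparison of distinct elements of equal height -/
  lexlt : T → T → Prop
  lexlt_same : ∀ a b : T, lexlt a b → htOf lt predWO a = htOf lt predWO b ∧ a ≠ b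
  lexlt_tricho : ∀ a b : T, htOf lt predWO a = htOf lt predWO b → a ≠ b →
    lexlt a b ∨ lexlt b a
  lexlt_asymm : ∀ a b : T, lexlt a b → ¬ lexlt b a
  lexlt_trans : ∀ {a b c : T}, lexlt a b → lexlt b c → lexlt a c
  /-- coherence: the lexicographic comparison is decided at the splitting level -/
  lexlt_coh : ∀ a b a' b' : T, lexlt a b → lt a a' → lt b b' →
    htOf lt predWO a' = htOf lt predWO b' → lexlt a' b'

namespace LexOmega1Tree

variable (S : LexOmega1Tree)

def ht : S.T → Ordinal := htOf S.lt S.predWO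

def le (a b : S.T) : Prop := S.lt a b ∨ a = b

/-- a cofinal branch : a downward closed chain meeting every level -/
def IsBranch (b : Set S.T) : Prop :=
  (∀ s t : S.T, t ∈ b → S.lt s t → s ∈ b) ∧
  (∀ s t : S.T, s ∈ b → t ∈ b → s = t ∨ S.lt s t ∨ S.lt t s) ∧
  (∀ α : Ordinal, α < omega1 → ∃ t ∈ b, S.ht t = α)

/-- the set `𝓑(T)` of cofinal branches -/
def Branch : Type := {b : Set S.T // S.IsBranch b}

/-- the lexicographic order on branches (and on arbitrary sets of nodes) -/
def blex (A B : Set S.T) : Prop := ∃ a ∈ A, ∃ b ∈ B, S.lexlt a b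

/-- the order topology on `(𝓑(T), <lex)`, generated by the open rays -/
def branchTop : TopologicalSpace S.Branch :=
  TopologicalSpace.generateFrom
    {s : Set S.Branch | ∃ a : S.Branch, s = {x | S.blex a.1 x.1} ∨ s = {x | S.blex x.1 a.1}}

/-- `b` is a local right end point of the downward closed subtree `W` -/
def IsLocalRightEP (W b : Set S.T) : Prop :=
  ∃ t ∈ b, ∀ s ∈ b, S.ht t ≤ S.ht s →
    ∀ u ∈ W, S.ht u = S.ht s → S.le t u → u = s ∨ S.lexlt u s

/-- `b` is a local left end point of the downward closed subtree `W` -/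
def IsLocalLeftEP (W b : Set S.T) : Prop :=
  ∃ t ∈ b, ∀ s ∈ b, S.ht t ≤ S.ht s →
    ∀ u ∈ W, S.ht u = S.ht s → S.le t u → u = s ∨ S.lexlt s u

def IsLocalEP (W b : Set S.T) : Prop := S.IsLocalRightEP W b ∨ S.IsLocalLeftEP W b

end LexOmega1Tree

/-! ### Auxiliary development -/

lemma omega1_pos : (0 : Ordinal) < omega1 := by
  have h0 : (0 : Cardinal) < Cardinal.aleph 1 :=
    lt_of_lt_of_le Cardinal.aleph0_pos (Cardinal.aleph0_le_aleph 1)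
  have := Cardinal.ord_lt_ord.2 h0
  rwa [Cardinal.ord_zero] at this

lemma omega1_isLimit : Order.IsSuccLimit omega1 :=
  Cardinal.isSuccLimit_ord (Cardinal.aleph0_le_aleph 1)

namespace LexOmega1Tree

variable {S : LexOmega1Tree}

lemma ht_lt_omega1 (t : S.T) : S.ht t < omega1 :=
  (S.level_nonempty (S.ht t)).1 ⟨t, rfl⟩

lemma lt_ht {s t : S.T} (h : S.lt s t) : S.ht s < S.ht t := by
  haveI := S.predWO t
  haveI := S.predWO s
  let f : PrincipalSeg (fun a b : {u : S.T // S.lt u s} => S.lt a.1 b.1)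
      (fun a b : {u : S.T // S.lt u t} => S.lt a.1 b.1) :=
    { toFun := fun u => ⟨u.1, S.lt_trans u.2 h⟩
      inj' := fun a b hab => by
        apply Subtype.ext
        have h2 := congrArg Subtype.val hab
        exact h2
      map_rel_iff' := Iff.rfl
      top := ⟨s, h⟩
      mem_range_iff_rel' := by
        rintro ⟨b, hb⟩
        constructor
        · rintro ⟨a, ha⟩
          rw [← ha]
          exact a.2
        · intro hbs
          exact ⟨⟨b, hbs⟩, rfl⟩ }
  exact f.ordinal_type_lt

lemma mem_ht_inj {b : S.Branch} {s t : S.T} (hs : s ∈ b.1) (htm : t ∈ b.1)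
    (h : S.ht s = S.ht t) : s = t := by
  rcases b.2.2.1 s t hs htm with h1 | h1 | h1
  · exact h1
  · exact absurd h (ne_of_lt (lt_ht h1))
  · exact absurd h.symm (ne_of_lt (lt_ht h1))

open scoped Classical in
/-- the node of the branch `b` at height `α` (junk value for `α ≥ ω₁`). -/
noncomputable def nd (b : S.Branch) (α : Ordinal) : S.T :=
  if h : ∃ t ∈ b.1, S.ht t = α then h.choose else (b.2.2.2 0 omega1_pos).choose

lemma nd_spec {b : S.Branch} {α : Ordinal} (hα : α < omega1) :
    nd b α ∈ b.1 ∧ S.ht (nd b α) = α := by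
  have h : ∃ t ∈ b.1, S.ht t = α := b.2.2.2 α hα
  unfold nd
  rw [dif_pos h]
  exact ⟨h.choose_spec.1, h.choose_spec.2⟩

lemma nd_mem {b : S.Branch} {α : Ordinal} (hα : α < omega1) : nd b α ∈ b.1 :=
  (nd_spec hα).1

lemma nd_ht {b : S.Branch} {α : Ordinal} (hα : α < omega1) : S.ht (nd b α) = α :=
  (nd_spec hα).2

lemma eq_nd {b : S.Branch} {t : S.T} (h : t ∈ b.1) : t = nd b (S.ht t) :=
  mem_ht_inj h (nd_mem (ht_lt_omega1 t)) (nd_ht (ht_lt_omega1 t)).symm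

lemma nd_lt_nd {b : S.Branch} {α β : Ordinal} (h : α < β) (hβ : β < omega1) :
    S.lt (nd b α) (nd b β) := by
  have hα : α < omega1 := h.trans hβ
  rcases b.2.2.1 _ _ (nd_mem hα) (nd_mem hβ) with h1 | h1 | h1
  · exact absurd (by rw [← nd_ht hα, h1, nd_ht hβ]) h.ne
  · exact h1
  · exfalso
    have := lt_ht h1
    rw [nd_ht hα, nd_ht hβ] at this
    exact absurd h (asymm this)

lemma branch_ext {b c : S.Branch} (h : ∀ α, α < omega1 → nd b α = nd c α) : b = c := by
  apply Subtype.ext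
  ext t
  constructor <;> intro hm
  · rw [eq_nd hm, h _ (ht_lt_omega1 t)]
    exact nd_mem (ht_lt_omega1 t)
  · rw [eq_nd hm, ← h _ (ht_lt_omega1 t)]
    exact nd_mem (ht_lt_omega1 t)

lemma exists_ne_nd {b c : S.Branch} (h : b ≠ c) :
    ∃ α, α < omega1 ∧ nd b α ≠ nd c α := by
  by_contra hcon
  push_neg at hcon
  exact h (branch_ext hcon)

lemma nd_eq_below {b c : S.Branch} {γ : Ordinal} (hγ : γ < omega1)
    (h : nd b γ = nd c γ) : ∀ β ≤ γ, nd b β = nd c β := by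
  intro β hβ
  rcases eq_or_lt_of_le hβ with rfl | hlt
  · exact h
  · have hlt' : S.lt (nd b β) (nd c γ) := h ▸ nd_lt_nd hlt hγ
    have hm : nd b β ∈ c.1 := c.2.1 _ _ (nd_mem hγ) hlt'
    have heq := eq_nd hm
    rw [nd_ht (hlt.trans hγ)] at heq
    exact heq

lemma mem_nd_eq {a c : S.Branch} {μ : Ordinal} (hμ : μ < omega1) (h : nd c μ ∈ a.1) :
    nd a μ = nd c μ :=
  mem_ht_inj (nd_mem hμ) h (by rw [nd_ht hμ, nd_ht hμ])

/-- the lexicographic order on branches -/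
def blt (b c : S.Branch) : Prop := S.blex b.1 c.1

lemma lexlt_nd_mono {b c : S.Branch} {α β : Ordinal}
    (h : S.lexlt (nd b α) (nd c α)) (hαβ : α < β) (hβ : β < omega1) :
    S.lexlt (nd b β) (nd c β) :=
  S.lexlt_coh _ _ _ _ h (nd_lt_nd hαβ hβ) (nd_lt_nd hαβ hβ)
    (by show S.ht _ = S.ht _; rw [nd_ht hβ, nd_ht hβ])

lemma blt_iff {b c : S.Branch} :
    blt b c ↔ ∃ α, α < omega1 ∧ S.lexlt (nd b α) (nd c α) := by
  constructor
  · rintro ⟨p, hp, q, hq, hpq⟩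
    have hs : S.ht p = S.ht q ∧ p ≠ q := S.lexlt_same p q hpq
    refine ⟨S.ht p, ht_lt_omega1 p, ?_⟩
    rw [← eq_nd hp, hs.1, ← eq_nd hq]
    exact hpq
  · rintro ⟨α, hα, h⟩
    exact ⟨_, nd_mem hα, _, nd_mem hα, h⟩

lemma blt_ne {b c : S.Branch} (h : blt b c) : b ≠ c := by
  rintro rfl
  obtain ⟨α, hα, hl⟩ := blt_iff.mp h
  exact (S.lexlt_same _ _ hl).2 rfl

/-- the splitting level of two branches -/
noncomputable def split (b c : S.Branch) : Ordinal := sInf {α | nd b α ≠ nd c α}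

lemma split_symm (b c : S.Branch) : split b c = split c b := by
  unfold split
  congr 1
  ext α
  exact ne_comm

lemma split_lt_omega1 (b c : S.Branch) : split b c < omega1 := by
  by_cases h : b = c
  · subst h
    have he : {α | nd b α ≠ nd b α} = (∅ : Set Ordinal) := by simp
    unfold split
    rw [he, Ordinal.sInf_empty]
    exact omega1_pos
  · obtain ⟨α, hα, hne⟩ := exists_ne_nd h
    exact lt_of_le_of_lt (csInf_le' hne) hα

lemma split_mem {b c : S.Branch} (h : b ≠ c) :
    nd b (split b c) ≠ nd c (split b c) := by
  have hne : {α : Ordinal | nd b α ≠ nd c α}.Nonempty := by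
    obtain ⟨α, _, hα⟩ := exists_ne_nd h
    exact ⟨α, hα⟩
  exact csInf_mem hne

lemma nd_eq_of_lt_split {b c : S.Branch} {β : Ordinal} (h : β < split b c) :
    nd b β = nd c β :=
  of_not_not (notMem_of_lt_csInf' h)

lemma blt_split {b c : S.Branch} (h : blt b c) :
    S.lexlt (nd b (split b c)) (nd c (split b c)) := by
  have hne := blt_ne h
  obtain ⟨α, hα, hl⟩ := blt_iff.mp h
  have hmem : split b c ≤ α := csInf_le' (S.lexlt_same _ _ hl).2
  have hslt : split b c < omega1 := split_lt_omega1 b c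
  rcases S.lexlt_tricho _ _ (show S.ht _ = S.ht _ by rw [nd_ht hslt, nd_ht hslt])
      (split_mem hne) with h1 | h1
  · exact h1
  · exfalso
    rcases eq_or_lt_of_le hmem with heq | hlt
    · rw [heq] at h1
      exact S.lexlt_asymm _ _ hl h1
    · exact S.lexlt_asymm _ _ hl (lexlt_nd_mono h1 hlt hα)

lemma blt_at {b c : S.Branch} (h : blt b c) {γ : Ordinal}
    (h1 : split b c ≤ γ) (h2 : γ < omega1) : S.lexlt (nd b γ) (nd c γ) := by
  rcases eq_or_lt_of_le h1 with rfl | hlt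
  · exact blt_split h
  · exact lexlt_nd_mono (blt_split h) hlt h2

lemma blt_trans {x y z : S.Branch} (h1 : blt x y) (h2 : blt y z) : blt x z := by
  have hγ : max (split x y) (split y z) < omega1 :=
    max_lt (split_lt_omega1 _ _) (split_lt_omega1 _ _)
  exact blt_iff.mpr ⟨_, hγ,
    S.lexlt_trans (blt_at h1 (le_max_left _ _) hγ) (blt_at h2 (le_max_right _ _) hγ)⟩

lemma blt_asymm {x y : S.Branch} (h1 : blt x y) : ¬ blt y x := by
  intro h2
  have hγ : max (split x y) (split y x) < omega1 :=
    max_lt (split_lt_omega1 _ _) (split_lt_omega1 _ _)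
  exact S.lexlt_asymm _ _ (blt_at h1 (le_max_left _ _) hγ)
    (blt_at h2 (le_max_right _ _) hγ)

lemma blt_tricho {b c : S.Branch} (h : b ≠ c) : blt b c ∨ blt c b := by
  have hslt := split_lt_omega1 b c
  rcases S.lexlt_tricho (nd b (split b c)) (nd c (split b c))
      (show S.ht _ = S.ht _ by rw [nd_ht hslt, nd_ht hslt]) (split_mem h) with h1 | h1
  · exact Or.inl (blt_iff.mpr ⟨_, hslt, h1⟩)
  · exact Or.inr (blt_iff.mpr ⟨_, hslt, h1⟩)

lemma split_le_right {x y z : S.Branch} (h1 : blt x y) (h2 : blt y z) :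
    split x z ≤ split y z := by
  by_contra hcon
  push_neg at hcon
  have hρ : split y z < omega1 := split_lt_omega1 _ _
  have he : nd x (split y z) = nd z (split y z) := nd_eq_of_lt_split hcon
  have hl : S.lexlt (nd y (split y z)) (nd z (split y z)) := blt_split h2
  rw [← he] at hl
  exact blt_asymm h1 (blt_iff.mpr ⟨_, hρ, hl⟩)

lemma split_le_left {x y z : S.Branch} (h1 : blt x y) (h2 : blt y z) :
    split x z ≤ split x y := by
  by_contra hcon
  push_neg at hcon
  have hρ : split x y < omega1 := split_lt_omega1 _ _
  have he : nd x (split x y) = nd z (split x y) := nd_eq_of_lt_split hcon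
  have hl : S.lexlt (nd x (split x y)) (nd y (split x y)) := blt_split h1
  rw [he] at hl
  exact blt_asymm h2 (blt_iff.mpr ⟨_, hρ, hl⟩)

/-- `c` is approximated by `A` from the left -/
def LeftApprox (A : Set S.Branch) (c : S.Branch) : Prop :=
  ∀ a, blt a c → ∃ d ∈ A, blt a d ∧ blt d c

/-- `c` is approximated by `A` from the right -/
def RightApprox (A : Set S.Branch) (c : S.Branch) : Prop :=
  ∀ b, blt c b → ∃ d ∈ A, blt c d ∧ blt d b

lemma approx_of_mem_closure {A : Set S.Branch} {c : S.Branch}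
    (hc : c ∈ @closure _ S.branchTop A) (hcA : c ∉ A) :
    LeftApprox A c ∨ RightApprox A c := by
  letI := S.branchTop
  by_contra hcon
  push_neg at hcon
  obtain ⟨hL, hR⟩ := hcon
  unfold LeftApprox at hL
  unfold RightApprox at hR
  push_neg at hL hR
  obtain ⟨a0, ha0, hLa⟩ := hL
  obtain ⟨b0, hb0, hRb⟩ := hR
  have hUopen : IsOpen ({x : S.Branch | S.blex a0.1 x.1} ∩ {x : S.Branch | S.blex x.1 b0.1}) := by
    apply TopologicalSpace.GenerateOpen.inter
    · exact TopologicalSpace.GenerateOpen.basic _ ⟨a0, Or.inl rfl⟩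
    · exact TopologicalSpace.GenerateOpen.basic _ ⟨b0, Or.inr rfl⟩
  obtain ⟨d, hdU, hdA⟩ := mem_closure_iff.mp hc _ hUopen ⟨ha0, hb0⟩
  rcases eq_or_ne d c with rfl | hne
  · exact hcA hdA
  · rcases blt_tricho hne with h | h
    · exact hLa d hdA hdU.1 h
    · exact hRb d hdA h hdU.2

/-- Main counting lemma : countable sets of branches have countable closure. -/
theorem countable_closure (S : LexOmega1Tree) {A : Set S.Branch} (hA : A.Countable) :
    (@closure _ S.branchTop A).Countable := by
  classical
  letI := S.branchTop
  haveI := hA.to_subtype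
  set lam : Ordinal := ⨆ p : (↥A × ↥A), split (p.1 : S.Branch) (p.2 : S.Branch) with hlam
  have hlamlt : lam < omega1 := by
    have hcof : omega1.cof = Cardinal.aleph 1 := by
      unfold omega1
      exact Cardinal.isRegular_aleph_one.cof_eq
    apply Ordinal.iSup_lt_ord
    · rw [hcof]
      exact lt_of_le_of_lt Cardinal.mk_le_aleph0 Cardinal.aleph0_lt_aleph_one
    · intro p
      exact split_lt_omega1 _ _
  set μ : Ordinal := lam + 1 with hμdef
  have hμ : μ < omega1 := by
    rw [hμdef, Ordinal.add_one_eq_succ]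
    exact omega1_isLimit.succ_lt hlamlt
  have hlamμ : lam < μ := by
    rw [hμdef, Ordinal.add_one_eq_succ]
    exact Order.lt_succ lam
  have hsup : ∀ d d' : S.Branch, d ∈ A → d' ∈ A → split d d' ≤ lam := by
    intro d d' hd hd'
    exact le_ciSup (Ordinal.bddAbove_range _) (⟨⟨d, hd⟩, ⟨d', hd'⟩⟩ : ↥A × ↥A)
  have keyL : ∀ c : S.Branch, LeftApprox A c → ∀ a, blt a c → split a c ≤ lam := by
    intro c hLc a hac
    obtain ⟨d, hdA, had, hdc⟩ := hLc a hac
    obtain ⟨d', hd'A, hdd', hd'c⟩ := hLc d hdc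
    calc split a c ≤ split d c := split_le_right had hdc
      _ ≤ split d d' := split_le_left hdd' hd'c
      _ ≤ lam := hsup d d' hdA hd'A
  have keyR : ∀ c : S.Branch, RightApprox A c → ∀ b, blt c b → split c b ≤ lam := by
    intro c hRc b hcb
    obtain ⟨d, hdA, hcd, hdb⟩ := hRc b hcb
    obtain ⟨d', hd'A, hcd', hd'd⟩ := hRc d hcd
    calc split c b ≤ split c d := split_le_left hcd hdb
      _ ≤ split d' d := split_le_right hcd' hd'd
      _ ≤ lam := hsup d' d hd'A hdA
  have hagree : ∀ c a : S.Branch, nd c μ ∈ a.1 → a ≠ c → ¬ split a c ≤ lam := by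
    intro c a hmem hne hle
    have h1 : nd a μ = nd c μ := mem_nd_eq hμ hmem
    have h2 : nd a (split a c) = nd c (split a c) :=
      nd_eq_below hμ h1 _ (le_of_lt (lt_of_le_of_lt hle hlamμ))
    exact split_mem hne h2
  have minL : ∀ c : S.Branch, LeftApprox A c → ∀ a : S.Branch,
      nd c μ ∈ a.1 → a = c ∨ blt c a := by
    intro c hLc a hmem
    by_cases hne : a = c
    · exact Or.inl hne
    · right
      rcases blt_tricho hne with h | h
      · exact absurd (keyL c hLc a h) (hagree c a hmem hne)
      · exact h
  have minR : ∀ c : S.Branch, RightApprox A c → ∀ a : S.Branch,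
      nd c μ ∈ a.1 → a = c ∨ blt a c := by
    intro c hRc a hmem
    by_cases hne : a = c
    · exact Or.inl hne
    · right
      rcases blt_tricho hne with h | h
      · exact h
      · exact absurd (split_symm a c ▸ keyR c hRc a h) (hagree c a hmem hne)
  set C : Set S.Branch := (@closure _ S.branchTop A) \ A with hC
  have hCc : C.Countable := by
    haveI : Countable ↥{t : S.T | S.ht t = μ} := (S.level_countable μ).to_subtype
    rw [← Set.countable_coe_iff]
    refine Function.Injective.countable
      (f := fun c : ↥C =>
        ((if LeftApprox A (c : S.Branch) then true else false),
          (⟨nd (c : S.Branch) μ, nd_ht hμ⟩ : {t : S.T | S.ht t = μ}))) ?_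
    intro c c' h
    have h1 : (if LeftApprox A (c : S.Branch) then true else false)
        = (if LeftApprox A (c' : S.Branch) then true else false) := congrArg Prod.fst h
    have h2 : nd (c : S.Branch) μ = nd (c' : S.Branch) μ :=
      congrArg (fun x : Bool × {t : S.T | S.ht t = μ} => (x.2 : S.T)) h
    have hdic := approx_of_mem_closure c.2.1 c.2.2
    have hdic' := approx_of_mem_closure c'.2.1 c'.2.2
    apply Subtype.ext
    by_cases hL : LeftApprox A (c : S.Branch)
    · have hL' : LeftApprox A (c' : S.Branch) := by
        by_contra hnot
        rw [if_pos hL, if_neg hnot] at h1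
        exact Bool.noConfusion h1
      have m1 := minL _ hL (c' : S.Branch) (by rw [h2]; exact nd_mem hμ)
      have m2 := minL _ hL' (c : S.Branch) (by rw [← h2]; exact nd_mem hμ)
      rcases m1 with he | hlt1
      · exact he.symm
      · rcases m2 with he | hlt2
        · exact he
        · exact absurd hlt2 (blt_asymm hlt1)
    · have hR : RightApprox A (c : S.Branch) := hdic.resolve_left hL
      have hL'f : ¬ LeftApprox A (c' : S.Branch) := by
        intro hc'L
        rw [if_neg hL, if_pos hc'L] at h1
        exact Bool.noConfusion h1
      have hR' : RightApprox A (c' : S.Branch) := hdic'.resolve_left hL'f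
      have m1 := minR _ hR (c' : S.Branch) (by rw [h2]; exact nd_mem hμ)
      have m2 := minR _ hR' (c : S.Branch) (by rw [← h2]; exact nd_mem hμ)
      rcases m1 with he | hlt1
      · exact he.symm
      · rcases m2 with he | hlt2
        · exact he
        · exact absurd hlt1 (blt_asymm hlt2)
  have hsub : (@closure _ S.branchTop A) ⊆ A ∪ C := by
    intro x hx
    by_cases h : x ∈ A
    · exact Or.inl h
    · exact Or.inr ⟨hx, h⟩
  exact (hA.union hCc).mono hsub

/-- every open set contains, around each of its points, a full node-neighborhood -/
lemma open_nhd {U : Set S.Branch} (hU : @IsOpen _ S.branchTop U) :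
    ∀ x ∈ U, ∃ α, α < omega1 ∧ ∀ y : S.Branch, nd x α ∈ y.1 → y ∈ U := by
  have hU' : TopologicalSpace.GenerateOpen
      {s : Set S.Branch | ∃ a : S.Branch,
        s = {x | S.blex a.1 x.1} ∨ s = {x | S.blex x.1 a.1}} U := hU
  clear hU
  induction hU' with
  | basic u hu =>
    obtain ⟨a, ha | ha⟩ := hu <;> subst ha <;> intro x hx
    · have hax : blt a x := hx
      have hρ : split a x < omega1 := split_lt_omega1 a x
      refine ⟨split a x, hρ, fun y hy => ?_⟩
      have he : nd y (split a x) = nd x (split a x) := mem_nd_eq hρ hy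
      show blt a y
      refine blt_iff.mpr ⟨split a x, hρ, ?_⟩
      rw [he]
      exact blt_split hax
    · have hxa : blt x a := hx
      have hρ : split x a < omega1 := split_lt_omega1 x a
      refine ⟨split x a, hρ, fun y hy => ?_⟩
      have he : nd y (split x a) = nd x (split x a) := mem_nd_eq hρ hy
      show blt y a
      refine blt_iff.mpr ⟨split x a, hρ, ?_⟩
      rw [he]
      exact blt_split hxa
  | univ => exact fun x _ => ⟨0, omega1_pos, fun y _ => trivial⟩
  | inter u v hu hv ihu ihv =>
    intro x hx
    obtain ⟨α, hα, hu'⟩ := ihu x hx.1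
    obtain ⟨β, hβ, hv'⟩ := ihv x hx.2
    refine ⟨max α β, max_lt hα hβ, fun y hy => ⟨hu' y ?_, hv' y ?_⟩⟩
    · rcases eq_or_lt_of_le (le_max_left α β) with he | hl
      · rwa [he]
      · exact y.2.1 _ _ hy (nd_lt_nd hl (max_lt hα hβ))
    · rcases eq_or_lt_of_le (le_max_right α β) with he | hl
      · rwa [he]
      · exact y.2.1 _ _ hy (nd_lt_nd hl (max_lt hα hβ))
  | sUnion s hs ih =>
    intro x hx
    obtain ⟨u, hus, hxu⟩ := hx
    obtain ⟨α, hα, h⟩ := ih u hus x hxu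
    exact ⟨α, hα, fun y hy => ⟨u, hus, h y hy⟩⟩

/-- the tree has at most `ℵ₁` nodes -/
lemma mk_T_le (S : LexOmega1Tree) : #S.T ≤ Cardinal.aleph 1 := by
  classical
  have he : ∀ α : Ordinal, ∃ f : S.T → ℕ, Set.InjOn f {t | S.ht t = α} := fun α =>
    Set.countable_iff_exists_injOn.mp (S.level_countable α)
  choose e he using he
  set F : S.T → omega1.ToType × ℕ := fun t =>
    ((Ordinal.ToType.mk (o := omega1)) ⟨S.ht t, ht_lt_omega1 t⟩, e (S.ht t) t) with hF
  have hFinj : Function.Injective F := by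
    intro t t' h
    have h1 := congrArg Prod.fst h
    have h2 := congrArg Prod.snd h
    simp only [hF] at h1 h2
    have hht : S.ht t = S.ht t' := by
      have := (Ordinal.ToType.mk (o := omega1)).injective h1
      exact congrArg Subtype.val this
    rw [← hht] at h2
    exact he (S.ht t) rfl hht.symm h2
  calc #S.T ≤ #(omega1.ToType × ℕ) := Cardinal.mk_le_of_injective hFinj
    _ ≤ Cardinal.aleph 1 := by
        rw [Cardinal.mk_prod, Cardinal.lift_id, Cardinal.lift_id, Cardinal.mk_toType,
          Cardinal.mk_nat]
        show omega1.card * ℵ₀ ≤ _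
        unfold omega1
        rw [Cardinal.card_ord, Cardinal.mul_eq_max (Cardinal.aleph0_le_aleph 1) le_rfl,
          max_eq_left (Cardinal.aleph0_le_aleph 1)]

end LexOmega1Tree

open LexOmega1Tree in
/-- If `T` is a lexicographically ordered `ω₁`-tree with exactly `ℵ₂`-many
cofinal branches, then `(𝓑(T), <lex)` is a Kurepa line: it has cardinality `ℵ₂`, the
closure (in the order topology) of every countable subset is countable, and its density
is exactly `ℵ₁`. -/
theorem stmt0 (S : LexOmega1Tree) (hcard : #S.Branch = Cardinal.aleph 2) :
    #S.Branch = Cardinal.aleph 2 ∧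
    (∀ A : Set S.Branch, A.Countable → (@closure _ S.branchTop A).Countable) ∧
    (∃ D : Set S.Branch, @Dense _ S.branchTop D ∧ #D ≤ Cardinal.aleph 1) ∧
    (∀ D : Set S.Branch, @Dense _ S.branchTop D → Cardinal.aleph 1 ≤ #D) := by
  classical
  have hne : Nonempty S.Branch := by
    rw [← Cardinal.mk_ne_zero_iff (α := S.Branch), hcard]
    exact (lt_of_lt_of_le Cardinal.aleph0_pos (Cardinal.aleph0_le_aleph 2)).ne'
  refine ⟨hcard, fun A hA => countable_closure S hA, ?_, ?_⟩
  · -- a dense set of size at most ℵ₁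
    let pick : S.T → S.Branch := fun t =>
      if h : ∃ b : S.Branch, t ∈ b.1 then h.choose else hne.some
    have hpick : ∀ t : S.T, (∃ b : S.Branch, t ∈ b.1) → t ∈ (pick t).1 := by
      intro t h
      simp only [pick, dif_pos h]
      exact h.choose_spec
    refine ⟨Set.range pick, ?_, le_trans Cardinal.mk_range_le (mk_T_le S)⟩
    · letI := S.branchTop
      rw [dense_iff_inter_open]
      intro U hU hUne
      obtain ⟨x, hx⟩ := hUne
      obtain ⟨α, hα, hnb⟩ := open_nhd hU x hx
      have hex : ∃ b : S.Branch, nd x α ∈ b.1 := ⟨x, nd_mem hα⟩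
      exact ⟨pick (nd x α), hnb _ (hpick _ hex), Set.mem_range_self _⟩
  · -- every dense set has size at least ℵ₁
    intro D hD
    by_contra hlt
    push_neg at hlt
    have hDc : D.Countable := (Cardinal.countable_iff_lt_aleph_one D).mpr hlt
    have hcl := countable_closure S hDc
    letI := S.branchTop
    rw [hD.closure_eq, Set.countable_univ_iff] at hcl
    have hle : #S.Branch ≤ ℵ₀ := Cardinal.mk_le_aleph0
    rw [hcard] at hle
    have h2 : ℵ₀ < Cardinal.aleph 2 :=
      lt_of_lt_of_le Cardinal.aleph0_lt_aleph_one (Cardinal.aleph_le_aleph.mpr one_le_two)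
    exact absurd hle (not_le.mpr h2)
end
end

section
/- Assume the Continuum Hypothesis (2^ℵ₀ = ℵ₁). Then the poset Q satisfies the ℵ₂-chain condition: every antichain of Q (a set of pairwise incompatible conditions, where two conditions are incompatible if they have no common lower bound) has cardinality at most ℵ₁. -/
noncomputable section

open Cardinal Set

/-- A condition `p = (T_p, b_p)` of the poset `Q` over the set `Λ`:
`T_p` is a lexicographically ordered countable normal tree of height `top + 1`
whose underlying set `carrier` is a subset of `Λ`, every element extends to the top
level, immediate-successor sets at non-top levels are countable dense linear orders
under the lexicographic order, and `b_p` is a countable partial function from `ω₂`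
to the top level `T_p(top)`. -/
structure QCond (Λ : Type) where
  carrier : Set Λ
  carrier_countable : carrier.Countable
  lt : Λ → Λ → Prop
  lt_mem : ∀ a b : Λ, lt a b → a ∈ carrier ∧ b ∈ carrier
  lt_irrefl : ∀ a : Λ, ¬ lt a a
  lt_trans : ∀ {a b c : Λ}, lt a b → lt b c → lt a c
  predWO : ∀ t : Λ, IsWellOrder {s : Λ // lt s t} fun a b => lt a.1 b.1
  /-- `α_p`, the height of the top level -/
  top : Ordinal
  ht_le : ∀ t ∈ carrier, htOf lt predWO t ≤ top
  ht_surj : ∀ β : Ordinal, β ≤ top → ∃ t ∈ carrier, htOf lt predWO t = β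
  normal : ∀ s t : Λ, s ∈ carrier → t ∈ carrier → htOf lt predWO s = htOf lt predWO t →
    Order.IsSuccLimit (htOf lt predWO s) → (∀ u : Λ, lt u s ↔ lt u t) → s = t
  top_ext : ∀ t ∈ carrier, ∃ s ∈ carrier, (lt t s ∨ t = s) ∧ htOf lt predWO s = top
  lexlt : Λ → Λ → Prop
  lexlt_same : ∀ a b : Λ, lexlt a b → a ∈ carrier ∧ b ∈ carrier ∧
    htOf lt predWO a = htOf lt predWO b ∧ a ≠ b
  lexlt_tricho : ∀ a b : Λ, a ∈ carrier → b ∈ carrier →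
    htOf lt predWO a = htOf lt predWO b → a ≠ b → lexlt a b ∨ lexlt b a
  lexlt_asymm : ∀ a b : Λ, lexlt a b → ¬ lexlt b a
  lexlt_trans : ∀ {a b c : Λ}, lexlt a b → lexlt b c → lexlt a c
  lexlt_coh : ∀ a b a' b' : Λ, lexlt a b → lt a a' → lt b b' →
    htOf lt predWO a' = htOf lt predWO b' → lexlt a' b'
  /-- immediate-successor sets at non-top levels are dense linear orders under `<lex` -/
  succ_dense : ∀ t ∈ carrier, htOf lt predWO t < top →
    ∀ s₁ s₂ : Λ, lt t s₁ → lt t s₂ →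
      htOf lt predWO s₁ = htOf lt predWO t + 1 → htOf lt predWO s₂ = htOf lt predWO t + 1 →
      lexlt s₁ s₂ → ∃ s₃ : Λ, lt t s₃ ∧ htOf lt predWO s₃ = htOf lt predWO t + 1 ∧
        lexlt s₁ s₃ ∧ lexlt s₃ s₂
  /-- the domain of the countable partial function `b_p : ω₂ ⇀ T_p(top)` -/
  bdom : Set Ordinal
  bdom_sub : bdom ⊆ Set.Iio omega2
  bdom_countable : bdom.Countable
  bfun : Ordinal → Λ
  bfun_mem : ∀ ξ ∈ bdom, bfun ξ ∈ carrier ∧ htOf lt predWO (bfun ξ) = top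

def QCond.ht {Λ : Type} (p : QCond Λ) : Λ → Ordinal := htOf p.lt p.predWO

/-- `QCond.le p q` means `p ≤ q`, i.e. `p` extends `q`: `T_p` restricted to heights
`≤ α_q` equals `T_q` (with the same lexicographic structure), `dom(b_p) ⊇ dom(b_q)`,
and `b_q(ξ) ≤_{T_p} b_p(ξ)` for every `ξ ∈ dom(b_q)`. -/
def QCond.le {Λ : Type} (p q : QCond Λ) : Prop :=
  q.top ≤ p.top ∧
  q.carrier = {t ∈ p.carrier | p.ht t ≤ q.top} ∧
  (∀ a b : Λ, q.lt a b ↔ p.lt a b ∧ a ∈ q.carrier ∧ b ∈ q.carrier) ∧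
  (∀ a b : Λ, q.lexlt a b ↔ p.lexlt a b ∧ a ∈ q.carrier ∧ b ∈ q.carrier) ∧
  q.bdom ⊆ p.bdom ∧
  (∀ ξ ∈ q.bdom, p.lt (q.bfun ξ) (p.bfun ξ) ∨ q.bfun ξ = p.bfun ξ)

universe v u

section CardLemmas

lemma my_CH_univ (hCH : (2 : Cardinal.{u}) ^ Cardinal.aleph 0 = Cardinal.aleph 1) :
    (2 : Cardinal.{v}) ^ Cardinal.aleph 0 = Cardinal.aleph 1 := by
  apply Cardinal.lift_injective.{u, v}
  rw [Cardinal.lift_power, Cardinal.lift_ofNat, Cardinal.lift_aleph, Cardinal.lift_aleph]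
  rw [Ordinal.lift_zero, Ordinal.lift_one]
  have := congrArg Cardinal.lift.{v, u} hCH
  rwa [Cardinal.lift_power, Cardinal.lift_ofNat, Cardinal.lift_aleph, Cardinal.lift_aleph,
    Ordinal.lift_zero, Ordinal.lift_one] at this

lemma my_aleph1_pow (hCH : (2 : Cardinal.{v}) ^ Cardinal.aleph 0 = Cardinal.aleph 1) :
    (Cardinal.aleph 1 : Cardinal.{v}) ^ (ℵ₀ : Cardinal.{v}) = Cardinal.aleph 1 := by
  rw [Cardinal.aleph_zero] at hCH
  rw [← hCH, ← Cardinal.power_mul, Cardinal.aleph0_mul_aleph0]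

lemma my_exists_enum {Λ : Type v} (C : Set Λ) (hC : C.Countable) :
    ∃ e : ℕ → Option Λ, ∀ z : Λ, z ∈ C ↔ some z ∈ Set.range e := by
  have h1 : (insert none (some '' C) : Set (Option Λ)).Countable := (hC.image _).insert _
  obtain ⟨e, he⟩ := h1.exists_eq_range ⟨none, Set.mem_insert _ _⟩
  refine ⟨e, fun z => ?_⟩
  rw [← he]
  simp [Set.mem_insert_iff]

lemma my_mk_opt_arrow {T : Type v} (hT : #T ≤ Cardinal.aleph 1)
    (hCH : (2 : Cardinal.{v}) ^ Cardinal.aleph 0 = Cardinal.aleph 1) :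
    #(ℕ → Option T) ≤ Cardinal.aleph 1 := by
  calc #(ℕ → Option T) = (#T + 1) ^ (ℵ₀ : Cardinal.{v}) := by
        rw [Cardinal.mk_arrow, Cardinal.mk_option, Cardinal.mk_nat]
        simp
    _ ≤ (Cardinal.aleph 1) ^ (ℵ₀ : Cardinal.{v}) := by
        apply Cardinal.power_le_power_right
        calc #T + 1 ≤ Cardinal.aleph 1 + 1 := add_le_add_left hT 1
          _ = Cardinal.aleph 1 := Cardinal.add_one_eq (Cardinal.aleph0_le_aleph 1)
    _ = Cardinal.aleph 1 := my_aleph1_pow hCH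

/-- The collection of countable subsets of a set of size ≤ ℵ₁ has size ≤ ℵ₁ (under CH). -/
lemma my_mk_ctble_subsets {σ : Type v} (hCH : (2 : Cardinal.{v}) ^ Cardinal.aleph 0 = Cardinal.aleph 1)
    (T : Set σ) (hT : #T ≤ Cardinal.aleph 1) :
    #{R : Set σ | R.Countable ∧ R ⊆ T} ≤ Cardinal.aleph 1 := by
  have key : ∀ y : ↥{R : Set σ | R.Countable ∧ R ⊆ T}, ∃ e : ℕ → Option ↥T,
      ∀ z : ↥T, (z : σ) ∈ y.1 ↔ some z ∈ Set.range e := by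
    intro y
    obtain ⟨e, he⟩ := my_exists_enum (Subtype.val ⁻¹' y.1 : Set ↥T)
      (y.2.1.preimage Subtype.val_injective)
    exact ⟨e, fun z => he z⟩
  choose e he using key
  have hinj : Function.Injective e := by
    intro y y' h
    apply Subtype.ext
    ext ξ
    constructor
    · intro hξ
      have hξT : ξ ∈ T := y.2.2 hξ
      have := (he y ⟨ξ, hξT⟩).mp hξ
      rw [h] at this
      exact (he y' ⟨ξ, hξT⟩).mpr this
    · intro hξ
      have hξT : ξ ∈ T := y'.2.2 hξ
      have := (he y' ⟨ξ, hξT⟩).mp hξ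
      rw [← h] at this
      exact (he y ⟨ξ, hξT⟩).mpr this
  exact (Cardinal.mk_le_of_injective hinj).trans (my_mk_opt_arrow hT hCH)

/-- Functions supported on a countable set, with values in a type of size ≤ ℵ₁. -/
lemma my_mk_supported {σ : Type v} {Λ : Type v} (hΛ : #Λ ≤ Cardinal.aleph 1)
    (hCH : (2 : Cardinal.{v}) ^ Cardinal.aleph 0 = Cardinal.aleph 1)
    (R : Set σ) (hR : R.Countable) (z0 : Λ) :
    #{g : σ → Λ | ∀ ξ ∉ R, g ξ = z0} ≤ Cardinal.aleph 1 := by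
  have hinj : Function.Injective
      (fun g : ↥{g : σ → Λ | ∀ ξ ∉ R, g ξ = z0} => (fun z : ↥R => g.1 z.1)) := by
    intro g g' h
    apply Subtype.ext
    funext ξ
    by_cases hξ : ξ ∈ R
    · exact congrFun h ⟨ξ, hξ⟩
    · rw [g.2 ξ hξ, g'.2 ξ hξ]
  calc #{g : σ → Λ | ∀ ξ ∉ R, g ξ = z0} ≤ #(↥R → Λ) := Cardinal.mk_le_of_injective hinj
    _ = #Λ ^ #↥R := by rw [Cardinal.mk_arrow]; simp
    _ ≤ (Cardinal.aleph 1) ^ (ℵ₀ : Cardinal.{v}) := by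
        apply (Cardinal.power_le_power_right hΛ).trans
        apply Cardinal.power_le_power_left (Cardinal.aleph_pos 1).ne'
        exact Cardinal.mk_le_aleph0_iff.mpr hR.to_subtype
    _ = Cardinal.aleph 1 := my_aleph1_pow hCH

end CardLemmas

section Abstract

variable {ι σ Λ : Type v} (F : Set ι) (a : ι → Set σ) (f : ι → σ → Λ) (i0 : ι) (z0 : Λ)

/-- union of domains over a subfamily -/
def DDom (X : Set ι) : Set σ := ⋃ i ∈ X, a i

lemma DDom_mono {X Y : Set ι} (h : X ⊆ Y) : DDom a X ⊆ DDom a Y := by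
  apply Set.iUnion₂_mono'
  exact fun i hi => ⟨i, h hi, subset_rfl⟩

lemma mem_DDom {i : ι} {X : Set ι} (hi : i ∈ X) : a i ⊆ DDom a X :=
  Set.subset_biUnion_of_mem hi

lemma mk_DDom_le (ha : ∀ i, (a i).Countable) (X : Set ι) (hX : #X ≤ Cardinal.aleph 1) :
    #(DDom a X) ≤ Cardinal.aleph 1 := by
  have h1 : DDom a X = ⋃ i : ↥X, a i.1 := by
    rw [DDom, Set.biUnion_eq_iUnion]
  rw [h1]
  calc #(⋃ i : ↥X, a i.1) ≤ Cardinal.sum fun i : ↥X => #(a i.1) := Cardinal.mk_iUnion_le_sum_mk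
    _ ≤ Cardinal.sum fun _ : ↥X => (ℵ₀ : Cardinal.{v}) :=
        Cardinal.sum_le_sum _ _ fun i => Cardinal.mk_le_aleph0_iff.mpr (ha i.1).to_subtype
    _ = #↥X * ℵ₀ := Cardinal.sum_const' _ _
    _ ≤ Cardinal.aleph 1 * Cardinal.aleph 1 :=
        mul_le_mul' hX ((Cardinal.aleph0_le_aleph 1).trans le_rfl)
    _ = Cardinal.aleph 1 := Cardinal.mul_eq_self (Cardinal.aleph0_le_aleph 1)

/-- canonical witness for an (R, g) pair -/
def wit (R : Set σ) (g : σ → Λ) : ι :=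
  @dite ι (∃ i, i ∈ F ∧ R ⊆ a i ∧ ∀ ξ ∈ R, f i ξ = g ξ) (Classical.dec _)
    (fun h => h.choose) (fun _ => i0)

lemma wit_spec {R : Set σ} {g : σ → Λ}
    (h : ∃ i, i ∈ F ∧ R ⊆ a i ∧ ∀ ξ ∈ R, f i ξ = g ξ) :
    wit F a f i0 R g ∈ F ∧ R ⊆ a (wit F a f i0 R g) ∧ ∀ ξ ∈ R, f (wit F a f i0 R g) ξ = g ξ := by
  rw [wit, dif_pos h]
  exact h.choose_spec

/-- one closure step -/
def stepF (X : Set ι) : Set ι :=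
  X ∪ {j | ∃ R g, R.Countable ∧ R ⊆ DDom a X ∧ (∀ ξ, ξ ∉ R → g ξ = z0) ∧ j = wit F a f i0 R g}

lemma subset_stepF (X : Set ι) : X ⊆ stepF F a f i0 z0 X := Set.subset_union_left

lemma mk_stepF_le (hΛ : #Λ ≤ Cardinal.aleph 1)
    (hCH : (2 : Cardinal.{v}) ^ Cardinal.aleph 0 = Cardinal.aleph 1)
    (ha : ∀ i, (a i).Countable) (X : Set ι) (hX : #X ≤ Cardinal.aleph 1) :
    #(stepF F a f i0 z0 X) ≤ Cardinal.aleph 1 := by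
  have hD : #(DDom a X) ≤ Cardinal.aleph 1 := mk_DDom_le a ha X hX
  set W : Set ι :=
    {j | ∃ R g, R.Countable ∧ R ⊆ DDom a X ∧ (∀ ξ, ξ ∉ R → g ξ = z0) ∧ j = wit F a f i0 R g}
    with hW
  have hWle : #W ≤ Cardinal.aleph 1 := by
    set P : Set (Set σ × (σ → Λ)) :=
      {Rg | Rg.1.Countable ∧ Rg.1 ⊆ DDom a X ∧ ∀ ξ, ξ ∉ Rg.1 → Rg.2 ξ = z0} with hP
    have hsub : W ⊆ (fun Rg : Set σ × (σ → Λ) => wit F a f i0 Rg.1 Rg.2) '' P := by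
      rintro j ⟨R, g, h1, h2, h3, h4⟩
      exact ⟨(R, g), ⟨h1, h2, h3⟩, h4.symm⟩
    have hPle : #P ≤ Cardinal.aleph 1 := by
      have hPsub : P ⊆ ⋃ R : ↥{R : Set σ | R.Countable ∧ R ⊆ DDom a X},
          {Rg : Set σ × (σ → Λ) | Rg.1 = R.1 ∧ ∀ ξ, ξ ∉ R.1 → Rg.2 ξ = z0} := by
        rintro ⟨R, g⟩ ⟨h1, h2, h3⟩
        exact Set.mem_iUnion.mpr ⟨⟨R, h1, h2⟩, rfl, h3⟩
      have hfib : ∀ R : ↥{R : Set σ | R.Countable ∧ R ⊆ DDom a X},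
          #{Rg : Set σ × (σ → Λ) | Rg.1 = R.1 ∧ ∀ ξ, ξ ∉ R.1 → Rg.2 ξ = z0} ≤
            Cardinal.aleph 1 := by
        intro R
        have hinj : Function.Injective (fun x :
            ↥{Rg : Set σ × (σ → Λ) | Rg.1 = R.1 ∧ ∀ ξ, ξ ∉ R.1 → Rg.2 ξ = z0} =>
            (⟨x.1.2, x.2.2⟩ : ↥{g : σ → Λ | ∀ ξ ∉ R.1, g ξ = z0})) := by
          rintro ⟨⟨R1, g1⟩, h1, h1'⟩ ⟨⟨R2, g2⟩, h2, h2'⟩ h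
          have hg : g1 = g2 := congrArg Subtype.val h
          apply Subtype.ext
          simp only [Prod.mk.injEq]
          exact ⟨h1.trans h2.symm, hg⟩
        exact (Cardinal.mk_le_of_injective hinj).trans
          (my_mk_supported hΛ hCH R.1 R.2.1 z0)
      calc #P ≤ #(⋃ R : ↥{R : Set σ | R.Countable ∧ R ⊆ DDom a X},
            {Rg : Set σ × (σ → Λ) | Rg.1 = R.1 ∧ ∀ ξ, ξ ∉ R.1 → Rg.2 ξ = z0}) :=
            Cardinal.mk_le_mk_of_subset hPsub
        _ ≤ Cardinal.sum fun R : ↥{R : Set σ | R.Countable ∧ R ⊆ DDom a X} =>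
            #{Rg : Set σ × (σ → Λ) | Rg.1 = R.1 ∧ ∀ ξ, ξ ∉ R.1 → Rg.2 ξ = z0} :=
            Cardinal.mk_iUnion_le_sum_mk
        _ ≤ Cardinal.sum fun _ : ↥{R : Set σ | R.Countable ∧ R ⊆ DDom a X} =>
            (Cardinal.aleph 1 : Cardinal.{v}) := Cardinal.sum_le_sum _ _ hfib
        _ = #{R : Set σ | R.Countable ∧ R ⊆ DDom a X} * Cardinal.aleph 1 :=
            Cardinal.sum_const' _ _
        _ ≤ Cardinal.aleph 1 * Cardinal.aleph 1 :=
            mul_le_mul' (my_mk_ctble_subsets hCH (DDom a X) hD) le_rfl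
        _ = Cardinal.aleph 1 := Cardinal.mul_eq_self (Cardinal.aleph0_le_aleph 1)
    exact ((Cardinal.mk_le_mk_of_subset hsub).trans Cardinal.mk_image_le).trans hPle
  calc #(stepF F a f i0 z0 X) ≤ #X + #W := Cardinal.mk_union_le _ _
    _ ≤ Cardinal.aleph 1 + Cardinal.aleph 1 := add_le_add hX hWle
    _ = Cardinal.aleph 1 := by
        rw [Cardinal.add_eq_self (Cardinal.aleph0_le_aleph 1)]

/-- the transfinite chain of closures -/
def chain : Ordinal.{v} → Set ι :=
  Ordinal.lt_wf.fix fun α IH => stepF F a f i0 z0 (⋃ β : Set.Iio α, IH β.1 β.2)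

lemma chain_eq (α : Ordinal.{v}) :
    chain F a f i0 z0 α = stepF F a f i0 z0 (⋃ β : Set.Iio α, chain F a f i0 z0 β.1) := by
  rw [chain, WellFounded.fix_eq]

lemma chain_mono : ∀ {β α : Ordinal.{v}}, β ≤ α →
    chain F a f i0 z0 β ⊆ chain F a f i0 z0 α := by
  intro β α h
  rcases eq_or_lt_of_le h with rfl | h
  · exact subset_rfl
  · rw [chain_eq F a f i0 z0 α]
    refine subset_trans ?_ (subset_stepF F a f i0 z0 _)
    exact Set.subset_iUnion (fun β : Set.Iio α => chain F a f i0 z0 β.1) ⟨β, h⟩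

lemma mk_iUnion_chain_le (hΛ : #Λ ≤ Cardinal.aleph 1)
    (hCH : (2 : Cardinal.{v}) ^ Cardinal.aleph 0 = Cardinal.aleph 1)
    (ha : ∀ i, (a i).Countable) :
    ∀ α : Ordinal.{v}, α.card ≤ Cardinal.aleph 1 →
      (∀ β < α, #(chain F a f i0 z0 β) ≤ Cardinal.aleph 1) →
      #(⋃ β : Set.Iio α, chain F a f i0 z0 β.1) ≤ Cardinal.aleph 1 := by
  intro α hα IH
  have hre : (⋃ β : Set.Iio α, chain F a f i0 z0 β.1) =
      ⋃ x : α.ToType, chain F a f i0 z0 ((Ordinal.ToType.mk (o := α)).symm x).1 := by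
    ext j
    simp only [Set.mem_iUnion]
    constructor
    · rintro ⟨⟨β, hβ⟩, hj⟩
      refine ⟨Ordinal.ToType.mk (o := α) ⟨β, hβ⟩, ?_⟩
      rwa [OrderIso.symm_apply_apply]
    · rintro ⟨x, hj⟩
      exact ⟨(Ordinal.ToType.mk (o := α)).symm x, hj⟩
  rw [hre]
  calc #(⋃ x : α.ToType, chain F a f i0 z0 ((Ordinal.ToType.mk (o := α)).symm x).1)
      ≤ Cardinal.sum fun x : α.ToType => #(chain F a f i0 z0 ((Ordinal.ToType.mk (o := α)).symm x).1) :=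
        Cardinal.mk_iUnion_le_sum_mk
    _ ≤ Cardinal.sum fun _ : α.ToType => (Cardinal.aleph 1 : Cardinal.{v}) := by
        apply Cardinal.sum_le_sum
        intro x
        exact IH _ ((Ordinal.ToType.mk (o := α)).symm x).2
    _ = #α.ToType * Cardinal.aleph 1 := Cardinal.sum_const' _ _
    _ ≤ Cardinal.aleph 1 * Cardinal.aleph 1 := by
        rw [Cardinal.mk_toType]
        exact mul_le_mul' hα le_rfl
    _ = Cardinal.aleph 1 := Cardinal.mul_eq_self (Cardinal.aleph0_le_aleph 1)

lemma mk_chain_le (hΛ : #Λ ≤ Cardinal.aleph 1)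
    (hCH : (2 : Cardinal.{v}) ^ Cardinal.aleph 0 = Cardinal.aleph 1)
    (ha : ∀ i, (a i).Countable) :
    ∀ α : Ordinal.{v}, α.card ≤ Cardinal.aleph 1 →
      #(chain F a f i0 z0 α) ≤ Cardinal.aleph 1 := by
  intro α
  induction α using Ordinal.induction with
  | h α IH =>
    intro hα
    rw [chain_eq]
    apply mk_stepF_le F a f i0 z0 hΛ hCH ha
    exact mk_iUnion_chain_le F a f i0 z0 hΛ hCH ha α hα
      fun β hβ => IH β hβ ((Ordinal.card_le_card hβ.le).trans hα)

/-- Any family of countable partial functions (pairwise disagreeing somewhere on the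
intersection of their domains) has size at most ℵ₁, under CH. -/
lemma abstract_cc {ι σ Λ : Type v} (i0 : ι) (z0 : Λ) (hΛ : #Λ ≤ Cardinal.aleph 1)
    (hCH : (2 : Cardinal.{v}) ^ Cardinal.aleph 0 = Cardinal.aleph 1)
    (F : Set ι) (a : ι → Set σ) (ha : ∀ i, (a i).Countable) (f : ι → σ → Λ)
    (hbad : ∀ i ∈ F, ∀ j ∈ F, i ≠ j → ∃ ξ ∈ a i ∩ a j, f i ξ ≠ f j ξ) :
    #F ≤ Cardinal.aleph 1 := by
  by_contra hbig
  push_neg at hbig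
  -- the closure after ω₁ many steps
  set ω₁ : Ordinal.{v} := (Cardinal.aleph 1).ord with hω₁
  have hω₁lim : Order.IsSuccLimit ω₁ := Cardinal.isSuccLimit_ord (Cardinal.aleph0_le_aleph 1)
  set G : Set ι := ⋃ β : Set.Iio ω₁, chain F a f i0 z0 β.1 with hG
  have hGcard : #G ≤ Cardinal.aleph 1 := by
    apply mk_iUnion_chain_le F a f i0 z0 hΛ hCH ha ω₁
    · rw [hω₁, Cardinal.card_ord]
    · intro β hβ
      exact mk_chain_le F a f i0 z0 hΛ hCH ha β
        ((Ordinal.card_le_card hβ.le).trans (by rw [hω₁, Cardinal.card_ord]))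
  have hchain_sub_G : ∀ β < ω₁, chain F a f i0 z0 β ⊆ G := by
    intro β hβ
    exact Set.subset_iUnion (fun β : Set.Iio ω₁ => chain F a f i0 z0 β.1) ⟨β, hβ⟩
  -- choose p ∈ F \ G
  have hns : ¬ F ⊆ G := by
    intro h
    exact absurd ((Cardinal.mk_le_mk_of_subset h).trans hGcard) (not_le.mpr hbig)
  obtain ⟨p, hpF, hpG⟩ := Set.not_subset.mp hns
  set D : Set σ := DDom a G with hD
  set R : Set σ := a p ∩ D with hRdef
  have hRc : R.Countable := (ha p).mono Set.inter_subset_left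
  -- find a stage α < ω₁ with R ⊆ DDom a (chain α)
  have hstage : ∃ α < ω₁, R ⊆ DDom a (chain F a f i0 z0 α) := by
    have h1 : ∀ ξ : ↥R, ∃ β, β < ω₁ ∧ (ξ : σ) ∈ DDom a (chain F a f i0 z0 β) := by
      rintro ⟨ξ, hξa, hξD⟩
      obtain ⟨S, ⟨i, rfl⟩, hξS⟩ := hξD
      simp only [Set.mem_iUnion] at hξS
      obtain ⟨hiG, hξi⟩ := hξS
      obtain ⟨⟨β, hβ⟩, hiβ⟩ := Set.mem_iUnion.mp hiG
      exact ⟨β, hβ, mem_DDom a hiβ hξi⟩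
    choose φ hφ using h1
    have hRcard : #↥R < ω₁.cof := by
      rw [hω₁, (Cardinal.isRegular_aleph_one).cof_eq]
      exact lt_of_le_of_lt (Cardinal.mk_le_aleph0_iff.mpr hRc.to_subtype)
        Cardinal.aleph0_lt_aleph_one
    have hsup : iSup φ < ω₁ := Ordinal.iSup_lt_ord hRcard fun ξ => (hφ ξ).1
    refine ⟨iSup φ, hsup, ?_⟩
    intro ξ hξ
    have h2 : φ ⟨ξ, hξ⟩ ≤ iSup φ := Ordinal.le_iSup φ ⟨ξ, hξ⟩
    exact DDom_mono a (chain_mono F a f i0 z0 h2) (hφ ⟨ξ, hξ⟩).2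
  obtain ⟨α, hα, hRsub⟩ := hstage
  -- the canonical witness
  set g : σ → Λ := fun ξ => @dite _ (ξ ∈ R) (Classical.dec _) (fun _ => f p ξ) (fun _ => z0)
    with hgdef
  have hgval : ∀ ξ ∈ R, g ξ = f p ξ := by
    intro ξ hξ
    rw [hgdef]
    exact dif_pos hξ
  have hgout : ∀ ξ, ξ ∉ R → g ξ = z0 := by
    intro ξ hξ
    rw [hgdef]
    exact dif_neg hξ
  have hex : ∃ i, i ∈ F ∧ R ⊆ a i ∧ ∀ ξ ∈ R, f i ξ = g ξ :=
    ⟨p, hpF, Set.inter_subset_left, fun ξ hξ => (hgval ξ hξ).symm⟩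
  set q : ι := wit F a f i0 R g with hqdef
  obtain ⟨hqF, hqR, hqg⟩ := wit_spec F a f i0 hex
  -- q belongs to the chain at stage α + 1, hence to G
  have hqchain : q ∈ chain F a f i0 z0 (Order.succ α) := by
    rw [chain_eq]
    apply Set.mem_union_right
    refine ⟨R, g, hRc, ?_, ?_, rfl⟩
    · refine hRsub.trans (DDom_mono a ?_)
      exact Set.subset_iUnion (fun β : Set.Iio (Order.succ α) => chain F a f i0 z0 β.1)
        ⟨α, Order.lt_succ α⟩
    · exact hgout
  have hqG : q ∈ G := hchain_sub_G _ (hω₁lim.succ_lt hα) hqchain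
  have hqp : p ≠ q := fun h => hpG (h ▸ hqG)
  -- derive the contradiction
  obtain ⟨ξ, hξmem, hξne⟩ := hbad p hpF q hqF hqp
  have hξR : ξ ∈ R := ⟨hξmem.1, mem_DDom a hqG hξmem.2⟩
  exact hξne ((hgval ξ hξR).symm.trans (hqg ξ hξR).symm)

end Abstract

section QCondLemmas

universe w

lemma my_htOf_congr {X : Type} {lt lt' : X → X → Prop} (h : lt = lt')
    (wo : ∀ t : X, IsWellOrder {s : X // lt s t} fun a b => lt a.1 b.1)
    (wo' : ∀ t : X, IsWellOrder {s : X // lt' s t} fun a b => lt' a.1 b.1) :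
    htOf lt wo = htOf lt' wo' := by
  subst h
  rw [Subsingleton.elim wo wo']

lemma my_top_eq {Λ : Type} (p q : QCond Λ) (hc : p.carrier = q.carrier)
    (hlt : p.lt = q.lt) : p.top = q.top := by
  have hht : htOf p.lt p.predWO = htOf q.lt q.predWO := my_htOf_congr hlt _ _
  apply le_antisymm
  · obtain ⟨t, ht, htop⟩ := p.ht_surj p.top le_rfl
    have h2 := q.ht_le t (by rw [← hc]; exact ht)
    rwa [← hht, htop] at h2
  · obtain ⟨t, ht, htop⟩ := q.ht_surj q.top le_rfl
    have h2 := p.ht_le t (by rw [hc]; exact ht)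
    rwa [hht, htop] at h2

lemma my_le_helper {Λ : Type} (r p : QCond Λ) (hc : r.carrier = p.carrier)
    (hlt : r.lt = p.lt) (hlex : r.lexlt = p.lexlt) (htop : r.top = p.top)
    (hb : p.bdom ⊆ r.bdom) (hf : ∀ ξ ∈ p.bdom, r.bfun ξ = p.bfun ξ) :
    QCond.le r p := by
  have hht : r.ht = p.ht := my_htOf_congr hlt _ _
  refine ⟨htop.ge, ?_, ?_, ?_, hb, ?_⟩
  · ext t
    constructor
    · intro htp
      refine ⟨by rw [hc]; exact htp, ?_⟩
      show r.ht t ≤ p.top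
      rw [hht]
      exact p.ht_le t htp
    · rintro ⟨h1, _⟩
      rw [← hc]
      exact h1
  · intro a b
    constructor
    · intro h
      obtain ⟨ha, hb'⟩ := p.lt_mem a b h
      rw [hlt]
      exact ⟨h, ha, hb'⟩
    · rintro ⟨h, _, _⟩
      rw [← hlt]
      exact h
  · intro a b
    constructor
    · intro h
      obtain ⟨ha, hb', _, _⟩ := p.lexlt_same a b h
      rw [hlex]
      exact ⟨h, ha, hb'⟩
    · rintro ⟨h, _, _⟩
      rw [← hlex]
      exact h
  · intro ξ hξ
    exact Or.inr (hf ξ hξ).symm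

lemma my_exists_common_ext {Λ : Type} (p q : QCond Λ) (hc : p.carrier = q.carrier)
    (hlt : p.lt = q.lt) (hlex : p.lexlt = q.lexlt)
    (hagree : ∀ ξ ∈ p.bdom ∩ q.bdom, p.bfun ξ = q.bfun ξ) :
    ∃ r : QCond Λ, QCond.le r p ∧ QCond.le r q := by
  have htop : p.top = q.top := my_top_eq p q hc hlt
  have hht : htOf p.lt p.predWO = htOf q.lt q.predWO := my_htOf_congr hlt _ _
  classical
  refine ⟨{ p with
      bdom := p.bdom ∪ q.bdom
      bdom_sub := Set.union_subset p.bdom_sub q.bdom_sub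
      bdom_countable := p.bdom_countable.union q.bdom_countable
      bfun := fun ξ => if ξ ∈ p.bdom then p.bfun ξ else q.bfun ξ
      bfun_mem := ?_ }, ?_, ?_⟩
  · intro ξ hξ
    by_cases h : ξ ∈ p.bdom
    · simpa [h] using p.bfun_mem ξ h
    · have hq : ξ ∈ q.bdom := hξ.resolve_left h
      obtain ⟨h1, h2⟩ := q.bfun_mem ξ hq
      refine ⟨by simp only [if_neg h]; rw [hc]; exact h1, ?_⟩
      simp only [if_neg h]
      rw [hht, h2, htop]
  · refine my_le_helper _ _ rfl rfl rfl rfl Set.subset_union_left ?_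
    intro ξ hξ
    simp [hξ]
  · refine my_le_helper _ _ hc hlt hlex htop Set.subset_union_right ?_
    intro ξ hξ
    by_cases h : ξ ∈ p.bdom
    · simp only [if_pos h]
      exact hagree ξ ⟨h, hξ⟩
    · simp [h]

/-- counting possible tree-data triples -/
lemma my_mk_treedata {Λ : Type} (hΛ : #Λ = Cardinal.aleph 1)
    (hCH0 : (2 : Cardinal.{0}) ^ Cardinal.aleph 0 = Cardinal.aleph 1)
    (S : Set (Set Λ × (Λ → Λ → Prop) × (Λ → Λ → Prop)))
    (hS : ∀ d ∈ S, d.1.Countable ∧ (∀ a b, d.2.1 a b → a ∈ d.1 ∧ b ∈ d.1) ∧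
      (∀ a b, d.2.2 a b → a ∈ d.1 ∧ b ∈ d.1)) :
    #S ≤ Cardinal.aleph 1 := by
  have key : ∀ y : ↥S, ∃ e : ℕ → Option Λ, ∀ z : Λ, z ∈ y.1.1 ↔ some z ∈ Set.range e :=
    fun y => my_exists_enum _ (hS y.1 y.2).1
  choose e he using key
  have hdir : ∀ (sel : (Set Λ × (Λ → Λ → Prop) × (Λ → Λ → Prop)) → Λ → Λ → Prop),
      (∀ d ∈ S, ∀ a b, sel d a b → a ∈ d.1 ∧ b ∈ d.1) →
      ∀ (y y' : ↥S), e y = e y' →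
      {mn : ℕ × ℕ | ∃ a b : Λ, e y mn.1 = some a ∧ e y mn.2 = some b ∧ sel y.1 a b} ⊆
      {mn : ℕ × ℕ | ∃ a b : Λ, e y' mn.1 = some a ∧ e y' mn.2 = some b ∧ sel y'.1 a b} →
      ∀ u w : Λ, sel y.1 u w → sel y'.1 u w := by
    intro sel hmem y y' h1 hsub u w hab
    obtain ⟨hu, hw⟩ := hmem y.1 y.2 u w hab
    obtain ⟨m, hm⟩ := (he y u).mp hu
    obtain ⟨n, hn⟩ := (he y w).mp hw
    obtain ⟨a', b', ha', hb', hab'⟩ := hsub (show (m, n) ∈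
      {mn : ℕ × ℕ | ∃ a b : Λ, e y mn.1 = some a ∧ e y mn.2 = some b ∧ sel y.1 a b} from
      ⟨u, w, hm, hn, hab⟩)
    rw [← h1] at ha' hb'
    have hu' : u = a' := Option.some.inj (hm.symm.trans ha')
    have hw' : w = b' := Option.some.inj (hn.symm.trans hb')
    rw [hu', hw']
    exact hab'
  set Ψ : ↥S → (ℕ → Option Λ) × Set (ℕ × ℕ) × Set (ℕ × ℕ) := fun y =>
    (e y, {mn : ℕ × ℕ | ∃ a b : Λ, e y mn.1 = some a ∧ e y mn.2 = some b ∧ y.1.2.1 a b},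
          {mn : ℕ × ℕ | ∃ a b : Λ, e y mn.1 = some a ∧ e y mn.2 = some b ∧ y.1.2.2 a b})
    with hΨ
  have hΨinj : Function.Injective Ψ := by
    intro y y' h
    have h1 : e y = e y' := congrArg Prod.fst h
    have h2 := congrArg (fun z : (ℕ → Option Λ) × Set (ℕ × ℕ) × Set (ℕ × ℕ) => z.2.1) h
    have h3 := congrArg (fun z : (ℕ → Option Λ) × Set (ℕ × ℕ) × Set (ℕ × ℕ) => z.2.2) h
    simp only [hΨ] at h2 h3
    have hcar : y.1.1 = y'.1.1 := by
      ext z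
      rw [he y z, he y' z, h1]
    have hrel1 : y.1.2.1 = y'.1.2.1 := by
      funext u w
      apply propext
      constructor
      · exact hdir (fun d => d.2.1) (fun d hd => (hS d hd).2.1) y y' h1 h2.subset u w
      · exact hdir (fun d => d.2.1) (fun d hd => (hS d hd).2.1) y' y h1.symm h2.superset u w
    have hrel2 : y.1.2.2 = y'.1.2.2 := by
      funext u w
      apply propext
      constructor
      · exact hdir (fun d => d.2.2) (fun d hd => (hS d hd).2.2) y y' h1 h3.subset u w
      · exact hdir (fun d => d.2.2) (fun d hd => (hS d hd).2.2) y' y h1.symm h3.superset u w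
    exact Subtype.ext (Prod.ext hcar (Prod.ext hrel1 hrel2))
  have htarget : #((ℕ → Option Λ) × Set (ℕ × ℕ) × Set (ℕ × ℕ)) ≤ Cardinal.aleph 1 := by
    have hA1 : #(ℕ → Option Λ) ≤ Cardinal.aleph 1 := my_mk_opt_arrow hΛ.le hCH0
    have hA2 : #(Set (ℕ × ℕ)) ≤ Cardinal.aleph 1 := by
      rw [Cardinal.mk_set, Cardinal.mk_denumerable]
      rw [Cardinal.aleph_zero] at hCH0
      rw [hCH0]
    calc #((ℕ → Option Λ) × Set (ℕ × ℕ) × Set (ℕ × ℕ))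
        = #(ℕ → Option Λ) * (#(Set (ℕ × ℕ)) * #(Set (ℕ × ℕ))) := by
          rw [Cardinal.mk_prod, Cardinal.mk_prod]
          simp
      _ ≤ Cardinal.aleph 1 * (Cardinal.aleph 1 * Cardinal.aleph 1) :=
          mul_le_mul' hA1 (mul_le_mul' hA2 hA2)
      _ = Cardinal.aleph 1 := by
          rw [Cardinal.mul_eq_self (Cardinal.aleph0_le_aleph 1),
            Cardinal.mul_eq_self (Cardinal.aleph0_le_aleph 1)]
  exact (Cardinal.mk_le_of_injective hΨinj).trans htarget

end QCondLemmas

universe u3 in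
lemma stmt8_aux {Λ : Type} (hΛ : #Λ = Cardinal.aleph 1)
    (hCH0 : (2 : Cardinal.{0}) ^ Cardinal.aleph 0 = Cardinal.aleph 1)
    (A : Set (QCond Λ))
    (hA : ∀ p ∈ A, ∀ q ∈ A, p ≠ q → ¬ ∃ r : QCond Λ, QCond.le r p ∧ QCond.le r q) :
    #A ≤ Cardinal.aleph 1 := by
  classical
  rcases Set.eq_empty_or_nonempty A with rfl | hAne
  · simp
  obtain ⟨z0⟩ : Nonempty Λ :=
    Cardinal.mk_ne_zero_iff.mp (by rw [hΛ]; exact (Cardinal.aleph_pos 1).ne')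
  obtain ⟨p0, hp0⟩ := hAne
  have hCH1 : (2 : Cardinal.{1}) ^ Cardinal.aleph 0 = Cardinal.aleph 1 := my_CH_univ hCH0
  set χ : ↥A → Set Λ × (Λ → Λ → Prop) × (Λ → Λ → Prop) :=
    fun x => (x.1.carrier, x.1.lt, x.1.lexlt) with hχ
  set jm : (omega2.{0}).ToType → Ordinal.{0} :=
    fun t => ((Ordinal.ToType.mk (o := omega2)).symm t).1 with hjm
  have hjm_inj : Function.Injective jm := fun s t h =>
    (Ordinal.ToType.mk (o := omega2)).symm.injective (Subtype.ext h)
  set aD : ↥A → Set (ULift.{1} (omega2.{0}).ToType) :=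
    fun x => {y | jm y.down ∈ x.1.bdom} with haD
  set fD : ↥A → ULift.{1} (omega2.{0}).ToType → ULift.{1, 0} Λ :=
    fun x y => ULift.up (x.1.bfun (jm y.down)) with hfD
  have haDc : ∀ x, (aD x).Countable := by
    intro x
    exact x.1.bdom_countable.preimage (hjm_inj.comp ULift.down_injective)
  -- every fiber of χ is small, by the abstract argument
  have fiber_bound : ∀ d, #(χ ⁻¹' {d}) ≤ Cardinal.aleph 1 := by
    intro d
    refine abstract_cc (⟨p0, hp0⟩ : ↥A) (ULift.up z0) ?_ hCH1 (χ ⁻¹' {d}) aD haDc fD ?_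
    · rw [Cardinal.mk_uLift, hΛ, Cardinal.lift_aleph, Ordinal.lift_one]
    · intro x hx y hy hxy
      have hd : χ x = χ y := by
        rw [Set.mem_preimage, Set.mem_singleton_iff] at hx hy
        rw [hx, hy]
      have hcc : x.1.carrier = y.1.carrier := congrArg Prod.fst hd
      have hltt : x.1.lt = y.1.lt :=
        congrArg (fun z : Set Λ × (Λ → Λ → Prop) × (Λ → Λ → Prop) => z.2.1) hd
      have hlexx : x.1.lexlt = y.1.lexlt :=
        congrArg (fun z : Set Λ × (Λ → Λ → Prop) × (Λ → Λ → Prop) => z.2.2) hd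
      by_contra hno
      push_neg at hno
      have hagree : ∀ ξ ∈ x.1.bdom ∩ y.1.bdom, x.1.bfun ξ = y.1.bfun ξ := by
        intro ξ hξ
        have hξ2 : ξ < omega2.{0} := x.1.bdom_sub hξ.1
        set t : (omega2.{0}).ToType := Ordinal.ToType.mk (o := omega2) ⟨ξ, hξ2⟩ with htdef
        have hjt : jm t = ξ := by
          rw [htdef]
          show ((Ordinal.ToType.mk (o := omega2)).symm
            (Ordinal.ToType.mk (o := omega2) ⟨ξ, hξ2⟩) : Ordinal.{0}) = ξ
          rw [OrderIso.symm_apply_apply]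

        have hmem : (ULift.up.{1} t) ∈ aD x ∩ aD y := by
          constructor
          · show jm (ULift.up.{1} t).down ∈ x.1.bdom
            rw [show (ULift.up.{1} t).down = t from rfl, hjt]
            exact hξ.1
          · show jm (ULift.up.{1} t).down ∈ y.1.bdom
            rw [show (ULift.up.{1} t).down = t from rfl, hjt]
            exact hξ.2
        have h5 := hno (ULift.up t) hmem
        have h6 := congrArg ULift.down h5
        simp only [hfD] at h6
        rwa [hjt] at h6
      obtain ⟨r, hr1, hr2⟩ := my_exists_common_ext x.1 y.1 hcc hltt hlexx hagree
      exact hA x.1 x.2 y.1 y.2 (fun h => hxy (Subtype.ext h)) ⟨r, hr1, hr2⟩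
  -- the range of χ is small
  have range_bound : #(Set.range χ) ≤ Cardinal.aleph 1 := by
    apply my_mk_treedata hΛ hCH0
    rintro d ⟨x, rfl⟩
    exact ⟨x.1.carrier_countable, fun a b h => x.1.lt_mem a b h,
      fun a b h => ⟨(x.1.lexlt_same a b h).1, (x.1.lexlt_same a b h).2.1⟩⟩
  -- combine
  set χ' : ↥A → ↥(Set.range χ) := fun x => ⟨χ x, Set.mem_range_self x⟩ with hχ'
  have hfib' : ∀ b : ↥(Set.range χ),
      Cardinal.lift.{0} #(χ' ⁻¹' {b}) ≤ (Cardinal.aleph 1 : Cardinal.{1}) := by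
    intro b
    rw [Cardinal.lift_uzero]
    have : χ' ⁻¹' {b} = χ ⁻¹' {b.1} := by
      ext x
      simp only [Set.mem_preimage, Set.mem_singleton_iff, hχ', Subtype.ext_iff]
    rw [this]
    exact fiber_bound b.1
  have hmain := Cardinal.lift_mk_le_lift_mk_mul_of_lift_mk_preimage_le χ' hfib'
  rw [Cardinal.lift_uzero] at hmain
  calc #↥A ≤ Cardinal.lift.{1} #↥(Set.range χ) * Cardinal.aleph 1 := hmain
    _ ≤ Cardinal.lift.{1} (Cardinal.aleph 1) * Cardinal.aleph 1 :=
        mul_le_mul' (Cardinal.lift_le.mpr range_bound) le_rfl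
    _ = Cardinal.aleph 1 * Cardinal.aleph 1 := by
        rw [Cardinal.lift_aleph, Ordinal.lift_one]
    _ = Cardinal.aleph 1 := Cardinal.mul_eq_self (Cardinal.aleph0_le_aleph 1)

/-- Assuming CH, the poset `Q` satisfies the `ℵ₂`-chain condition: every
set of pairwise incompatible conditions has cardinality at most `ℵ₁`. -/
theorem stmt8 (Λ : Type) (hΛ : #Λ = Cardinal.aleph 1)
    (hCH : (2 : Cardinal) ^ Cardinal.aleph 0 = Cardinal.aleph 1)
    (A : Set (QCond Λ))
    (hA : ∀ p ∈ A, ∀ q ∈ A, p ≠ q → ¬ ∃ r : QCond Λ, QCond.le r p ∧ QCond.le r q) :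
    #A ≤ Cardinal.aleph 1 := by
  exact stmt8_aux hΛ (my_CH_univ hCH) A hA
end
end

section
/- Let T be a lexicographically ordered ω₁-tree, L ⊆ 𝓑(T), and U = ⋃L. Assume that for every t ∈ U the set {c ∈ L : t ∈ c} has cardinality at least ℵ₂. If b ∈ L is not a local left end point of U and t ∈ b, then the set {c ∈ L : t ∈ c and c <lex b} has cardinality at least ℵ₂. -/
noncomputable section

open Cardinal Set

/-- Let `L ⊆ 𝓑(T)` and `U = ⋃L`, and assume every `t ∈ U` lies on at least
`ℵ₂`-many branches from `L`. If `b ∈ L` is not a local left end point of `U` and `t ∈ b`,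
then at least `ℵ₂`-many branches `c ∈ L` pass through `t` with `c <lex b`. -/
theorem stmt11 (S : LexOmega1Tree) (L : Set (Set S.T)) (hL : ∀ b ∈ L, S.IsBranch b)
    (hbig : ∀ t ∈ {t : S.T | ∃ c ∈ L, t ∈ c},
      Cardinal.aleph 2 ≤ #{c : Set S.T | c ∈ L ∧ t ∈ c})
    (b : Set S.T) (hb : b ∈ L)
    (hnl : ¬ S.IsLocalLeftEP {t : S.T | ∃ c ∈ L, t ∈ c} b)
    (t : S.T) (htb : t ∈ b) :
    Cardinal.aleph 2 ≤ #{c : Set S.T | c ∈ L ∧ t ∈ c ∧ S.blex c b} := by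
  rw [LexOmega1Tree.IsLocalLeftEP] at hnl
  push_neg at hnl
  obtain ⟨s, hsb, hts, u, huU, hus, htu, hune, hnsl⟩ := hnl t htb
  have hlex : S.lexlt u s := by
    rcases S.lexlt_tricho u s hus hune with h | h
    · exact h
    · exact absurd h hnsl
  have hsub : {c : Set S.T | c ∈ L ∧ u ∈ c} ⊆
      {c : Set S.T | c ∈ L ∧ t ∈ c ∧ S.blex c b} := by
    rintro c ⟨hcL, huc⟩
    refine ⟨hcL, ?_, u, huc, s, hsb, hlex⟩
    rcases htu with h | h
    · exact (hL c hcL).1 t u huc h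
    · rw [h]; exact huc
  calc Cardinal.aleph 2 ≤ #{c : Set S.T | c ∈ L ∧ u ∈ c} := hbig u huU
    _ ≤ _ := Cardinal.mk_le_mk_of_subset hsub
end
end

section
/- Let T be an ω₁-tree and let L ⊆ 𝓑(T) have cardinality ℵ₂. Then there exists L' ⊆ L of cardinality ℵ₂ such that for every t ∈ ⋃L', the set {c ∈ L' : t ∈ c} has cardinality exactly ℵ₂ (that is, ⋃L' is everywhere Kurepa with respect to L'). -/
noncomputable section

open Cardinal Set

/-- An `ω₁`-tree (no lexicographic structure). -/
structure Omega1Tree where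
  T : Type
  lt : T → T → Prop
  lt_irrefl : ∀ a : T, ¬ lt a a
  lt_trans : ∀ {a b c : T}, lt a b → lt b c → lt a c
  /-- the strict predecessors of any element are well-ordered -/
  predWO : ∀ t : T, IsWellOrder {s : T // lt s t} fun a b => lt a.1 b.1
  /-- every level is countable -/
  level_countable : ∀ α : Ordinal, {t : T | htOf lt predWO t = α}.Countable
  /-- levels are nonempty exactly below `ω₁` -/
  level_nonempty : ∀ α : Ordinal, (∃ t : T, htOf lt predWO t = α) ↔ α < omega1

namespace Omega1Tree

variable (S : Omega1Tree)

def ht : S.T → Ordinal := htOf S.lt S.predWO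

/-- a cofinal branch : a downward closed chain meeting every level -/
def IsBranch (b : Set S.T) : Prop :=
  (∀ s t : S.T, t ∈ b → S.lt s t → s ∈ b) ∧
  (∀ s t : S.T, s ∈ b → t ∈ b → s = t ∨ S.lt s t ∨ S.lt t s) ∧
  (∀ α : Ordinal, α < omega1 → ∃ t ∈ b, S.ht t = α)

/-- the set `𝓑(T)` of cofinal branches -/
def Branch : Type := {b : Set S.T // S.IsBranch b}

end Omega1Tree

lemma aleph1_lt_aleph2 : Cardinal.aleph 1 < Cardinal.aleph 2 :=
  Cardinal.aleph_lt_aleph.mpr one_lt_two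

lemma aleph2_eq_succ : Cardinal.aleph 2 = Order.succ (Cardinal.aleph 1) := by
  rw [← Cardinal.aleph_succ]
  norm_num

lemma le_aleph1_of_lt_aleph2 {c : Cardinal} (h : c < Cardinal.aleph 2) :
    c ≤ Cardinal.aleph 1 := by
  rwa [aleph2_eq_succ, Order.lt_succ_iff] at h

lemma diff_big {α : Type} {A D : Set α} (hA : Cardinal.aleph 2 ≤ #A)
    (hD : #D ≤ Cardinal.aleph 1) : Cardinal.aleph 2 ≤ #(A \ D : Set α) := by
  by_contra h
  push_neg at h
  have hsub : A ⊆ (A \ D) ∪ D := fun x hx => by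
    by_cases hxD : x ∈ D
    · exact Or.inr hxD
    · exact Or.inl ⟨hx, hxD⟩
  have h1 : #A ≤ #(A \ D : Set α) + #D :=
    (Cardinal.mk_le_mk_of_subset hsub).trans (Cardinal.mk_union_le _ _)
  have hlt : #(A \ D : Set α) + #D < Cardinal.aleph 2 :=
    Cardinal.add_lt_of_lt (Cardinal.aleph0_le_aleph 2) h (hD.trans_lt aleph1_lt_aleph2)
  exact absurd (hA.trans h1) hlt.not_ge

lemma mk_T_le (S : Omega1Tree) : #S.T ≤ Cardinal.aleph 1 := by
  have hcover : (Set.univ : Set S.T)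
      = ⋃ (i : omega1.ToType), {t | S.ht t = (((Ordinal.ToType.mk (o := omega1))).symm i).1} := by
    ext t
    simp only [Set.mem_univ, Set.mem_iUnion, true_iff]
    have ht1 : S.ht t < omega1 := (S.level_nonempty (S.ht t)).mp ⟨t, rfl⟩
    refine ⟨(Ordinal.ToType.mk (o := omega1)) ⟨S.ht t, ht1⟩, ?_⟩
    simp
  calc #S.T = #(Set.univ : Set S.T) := Cardinal.mk_univ.symm
    _ ≤ Cardinal.sum (fun i : omega1.ToType =>
          #{t | S.ht t = (((Ordinal.ToType.mk (o := omega1))).symm i).1}) := by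
        rw [hcover]; exact Cardinal.mk_iUnion_le_sum_mk
    _ ≤ Cardinal.sum (fun _ : omega1.ToType => Cardinal.aleph0) := by
        refine Cardinal.sum_le_sum _ _ (fun i => ?_)
        exact (S.level_countable _).le_aleph0
    _ = #omega1.ToType * Cardinal.aleph0 := Cardinal.sum_const' _ _
    _ ≤ Cardinal.aleph 1 * Cardinal.aleph 1 := by
        refine mul_le_mul' ?_ (Cardinal.aleph0_le_aleph 1)
        rw [Cardinal.mk_toType, omega1, Cardinal.card_ord]
    _ = Cardinal.aleph 1 := Cardinal.mul_eq_self (Cardinal.aleph0_le_aleph 1)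

/-- If `T` is an `ω₁`-tree and `L ⊆ 𝓑(T)` has cardinality `ℵ₂`, then there
is `L' ⊆ L` of cardinality `ℵ₂` such that every `t ∈ ⋃L'` lies on exactly `ℵ₂`-many
branches of `L'` (i.e. `⋃L'` is everywhere Kurepa with respect to `L'`). -/
theorem stmt13 (S : Omega1Tree) (L : Set (Set S.T)) (hL : ∀ b ∈ L, S.IsBranch b)
    (hcard : #L = Cardinal.aleph 2) :
    ∃ L' ⊆ L, #L' = Cardinal.aleph 2 ∧
      ∀ t : S.T, (∃ c ∈ L', t ∈ c) →
        #{c : Set S.T | c ∈ L' ∧ t ∈ c} = Cardinal.aleph 2 := by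
  classical
  set Good : S.T → Prop := fun t => Cardinal.aleph 2 ≤ #{c : Set S.T | c ∈ L ∧ t ∈ c} with hGood
  set D : Set (Set S.T) := ⋃ (t : {t : S.T // ¬ Good t}), {c | c ∈ L ∧ t.1 ∈ c} with hDdef
  have hD : #D ≤ Cardinal.aleph 1 := by
    calc #D ≤ Cardinal.sum (fun t : {t : S.T // ¬ Good t} => #{c : Set S.T | c ∈ L ∧ t.1 ∈ c}) :=
          Cardinal.mk_iUnion_le_sum_mk
      _ ≤ Cardinal.sum (fun _ : {t : S.T // ¬ Good t} => Cardinal.aleph 1) := by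
          refine Cardinal.sum_le_sum _ _ (fun t => ?_)
          exact le_aleph1_of_lt_aleph2 (not_le.mp t.2)
      _ = #{t : S.T // ¬ Good t} * Cardinal.aleph 1 := Cardinal.sum_const' _ _
      _ ≤ Cardinal.aleph 1 * Cardinal.aleph 1 :=
          mul_le_mul' ((Cardinal.mk_subtype_le _).trans (mk_T_le S)) le_rfl
      _ = Cardinal.aleph 1 := Cardinal.mul_eq_self (Cardinal.aleph0_le_aleph 1)
  refine ⟨L \ D, Set.diff_subset, ?_, ?_⟩
  · refine le_antisymm ?_ (diff_big hcard.ge hD)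
    calc #(L \ D : Set (Set S.T)) ≤ #L := Cardinal.mk_le_mk_of_subset Set.diff_subset
      _ = Cardinal.aleph 2 := hcard
  · rintro t ⟨c, ⟨hcL, hcD⟩, htc⟩
    have hgood : Good t := by
      by_contra hbad
      exact hcD (Set.mem_iUnion.mpr ⟨⟨t, hbad⟩, hcL, htc⟩)
    have heq : {c : Set S.T | c ∈ L \ D ∧ t ∈ c}
        = {c : Set S.T | c ∈ L ∧ t ∈ c} \ D := by
      ext x
      simp only [Set.mem_setOf_eq, Set.mem_diff]
      tauto
    refine le_antisymm ?_ ?_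
    · calc #{c : Set S.T | c ∈ L \ D ∧ t ∈ c}
          ≤ #L := Cardinal.mk_le_mk_of_subset (fun x hx => hx.1.1)
        _ = Cardinal.aleph 2 := hcard
    · rw [heq]
      exact diff_big hgood hD
end
end
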